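/- (Proposition 4.4 in radial form: the first nonzero Steklov eigenvalue of the geodesic ball) Let κ ≤ 0, let n ≥ 2 be an integer, let F solve the ODE of the paper with F(0) = 0, F'(0) = 1, and define G(r) := 2 F(r) F'(r) + (n−1)(sn_κ'(r)/sn_κ(r)) F(r)² and H(r) := F'(r)² + (n−1) F(r)²/sn_κ(r)². Then for every R > 0, ( ∫₀^R H(r) sn_κ(r)^{n−1} dr ) / ( ∫₀^R G(r) sn_κ(r)^{n−1} dr ) = F'(R)/F(R), which equals the first nonzero Steklov eigenvalue of the geodesic ball of radius R in the space form of curvature κ. -/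

import Mathlib

open Set

/-- The comparison sine function `sn_κ` for `κ ≤ 0`: `sn_0(t) = t` and
`sn_κ(t) = sinh(√(-κ) t)/√(-κ)` for `κ < 0`. -/
noncomputable def snk (κ : ℝ) (t : ℝ) : ℝ :=
  if κ = 0 then t else Real.sinh (Real.sqrt (-κ) * t) / Real.sqrt (-κ)


lemma snk_zero (κ : ℝ) : snk κ 0 = 0 := by
  unfold snk; split <;> simp

lemma snk_hasDerivAt (κ : ℝ) (hκ : κ ≤ 0) (t : ℝ) :
    HasDerivAt (snk κ) (if κ = 0 then 1 else Real.cosh (Real.sqrt (-κ) * t)) t := by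
  by_cases h : κ = 0
  · simp only [h, if_pos]
    have : snk 0 = fun t : ℝ => t := by funext x; simp [snk]
    rw [this]; exact hasDerivAt_id' t
  · have hκ' : 0 < -κ := neg_pos.2 (lt_of_le_of_ne hκ h)
    have ha : 0 < Real.sqrt (-κ) := Real.sqrt_pos.2 hκ'
    simp only [h, if_neg, if_false]
    have h1 : HasDerivAt (fun t : ℝ => Real.sqrt (-κ) * t) (Real.sqrt (-κ)) t := by
      simpa using (hasDerivAt_id t).const_mul (Real.sqrt (-κ))
    have h2 : HasDerivAt (fun t : ℝ => Real.sinh (Real.sqrt (-κ) * t))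
        (Real.cosh (Real.sqrt (-κ) * t) * Real.sqrt (-κ)) t :=
      (Real.hasDerivAt_sinh _).comp t h1
    have h3 := h2.div_const (Real.sqrt (-κ))
    have : Real.cosh (Real.sqrt (-κ) * t) * Real.sqrt (-κ) / Real.sqrt (-κ)
        = Real.cosh (Real.sqrt (-κ) * t) := by field_simp
    rw [this] at h3
    exact h3.congr_of_eventuallyEq (by filter_upwards with x; simp [snk, h])

lemma snk_pos (κ : ℝ) (hκ : κ ≤ 0) {t : ℝ} (ht : 0 < t) : 0 < snk κ t := by
  unfold snk; split
  · exact ht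
  · next h =>
    have hκ' : 0 < -κ := neg_pos.2 (lt_of_le_of_ne hκ h)
    have ha : 0 < Real.sqrt (-κ) := Real.sqrt_pos.2 hκ'
    exact div_pos (Real.sinh_pos_iff.2 (by positivity)) ha

lemma snk_deriv_pos (κ : ℝ) (hκ : κ ≤ 0) (t : ℝ) : 0 < deriv (snk κ) t := by
  rw [(snk_hasDerivAt κ hκ t).deriv]
  split
  · norm_num
  · exact lt_of_lt_of_le one_pos (Real.one_le_cosh _)

lemma snk_continuous (κ : ℝ) : Continuous (snk κ) := by
  unfold snk; split
  · exact continuous_id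
  · exact (Real.continuous_sinh.comp (continuous_const.mul continuous_id)).div_const _


/-- Proposition 4.4 in radial form: for every `R > 0`,
`(∫₀^R H sn_κ^{n-1} dr)/(∫₀^R G sn_κ^{n-1} dr) = F'(R)/F(R)`, the first nonzero Steklov
eigenvalue of the geodesic ball of radius `R` in the space form of curvature `κ`. -/
theorem steklov_eigenvalue_ball_radial
    (κ : ℝ) (hκ : κ ≤ 0) (n : ℕ) (hn : 2 ≤ n) (F : ℝ → ℝ)
    (hFc : ContinuousOn F (Ici 0))
    (hF2 : ContDiffOn ℝ 2 F (Ioi 0))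
    (hF0 : F 0 = 0)
    (hF'0 : HasDerivWithinAt F 1 (Ici 0) 0)
    (hODE : ∀ r > 0, deriv (deriv F) r
      + ((n : ℝ) - 1) * (deriv (snk κ) r / snk κ r) * deriv F r
      - (((n : ℝ) - 1) / (snk κ r) ^ 2) * F r = 0)
    (hFpos : ∀ r > 0, 0 < F r) (hF'pos : ∀ r > 0, 0 < deriv F r)
    (G : ℝ → ℝ)
    (hG : ∀ r, G r = 2 * F r * deriv F r + ((n : ℝ) - 1) * (deriv (snk κ) r / snk κ r) * (F r) ^ 2)
    (H : ℝ → ℝ)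
    (hH : ∀ r, H r = (deriv F r) ^ 2 + ((n : ℝ) - 1) * (F r) ^ 2 / (snk κ r) ^ 2) :
    ∀ R > 0,
      (∫ r in (0 : ℝ)..R, H r * snk κ r ^ (n - 1)) /
        (∫ r in (0 : ℝ)..R, G r * snk κ r ^ (n - 1)) = deriv F R / F R := by
  intro R hR
  obtain ⟨m, rfl⟩ : ∃ m, n = m + 2 := ⟨n - 2, by omega⟩
  simp only [show m + 2 - 1 = m + 1 from rfl]
  have hsd : ∀ t : ℝ, HasDerivAt (snk κ) (deriv (snk κ) t) t := by
    intro t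
    have h := snk_hasDerivAt κ hκ t
    rw [h.deriv]; exact h
  have hspos : ∀ t > (0:ℝ), 0 < snk κ t := fun t ht => snk_pos κ hκ ht
  have hqpos : ∀ t : ℝ, 0 < deriv (snk κ) t := snk_deriv_pos κ hκ
  have hFdiff : DifferentiableOn ℝ F (Ioi 0) := hF2.differentiableOn (by norm_num)
  have hFd : ∀ x ∈ Ioi (0:ℝ), HasDerivAt F (deriv F x) x := fun x hx =>
    (hFdiff.differentiableAt (isOpen_Ioi.mem_nhds hx)).hasDerivAt
  have hdF2 : ContDiffOn ℝ 1 (deriv F) (Ioi 0) := hF2.deriv_of_isOpen isOpen_Ioi (by norm_num)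
  have hF'd : ∀ x ∈ Ioi (0:ℝ), HasDerivAt (deriv F) (deriv (deriv F) x) x := fun x hx =>
    ((hdF2.differentiableOn (by norm_num)).differentiableAt (isOpen_Ioi.mem_nhds hx)).hasDerivAt
  -- rearranged ODE
  have hc : ∀ x ∈ Ioi (0:ℝ), deriv (deriv F) x =
      ((m:ℝ)+1) * F x / (snk κ x)^2 - ((m:ℝ)+1) * deriv (snk κ) x * deriv F x / snk κ x := by
    intro x hx
    have h := hODE x hx
    push_cast at h
    linear_combination h
  -- derivative of F * F' * snk^(m+1)
  have keyH : ∀ x ∈ Ioi (0:ℝ), HasDerivAt (fun r => F r * deriv F r * snk κ r ^ (m+1))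
      (H x * snk κ x ^ (m+1)) x := by
    intro x hx
    have hp' : snk κ x ≠ 0 := (hspos x hx).ne'
    have hd := ((hFd x hx).mul (hF'd x hx)).mul ((hsd x).pow (m+1))
    have heq : (deriv F x * deriv F x + F x * deriv (deriv F) x) * snk κ x ^ (m+1)
        + F x * deriv F x * (((m+1 : ℕ):ℝ) * snk κ x ^ (m+1-1) * deriv (snk κ) x)
        = H x * snk κ x ^ (m+1) := by
      rw [hH, hc x hx, show m + 1 - 1 = m from rfl]
      push_cast
      field_simp
      ring
    rw [← heq]; exact hd
  -- derivative of F^2 * snk^(m+1)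
  have keyG : ∀ x ∈ Ioi (0:ℝ), HasDerivAt (fun r => F r ^ 2 * snk κ r ^ (m+1))
      (G x * snk κ x ^ (m+1)) x := by
    intro x hx
    have hp' : snk κ x ≠ 0 := (hspos x hx).ne'
    have hd := ((hFd x hx).pow 2).mul ((hsd x).pow (m+1))
    have heq : (((2:ℕ):ℝ) * F x ^ (2-1) * deriv F x) * snk κ x ^ (m+1)
        + F x ^ 2 * (((m+1 : ℕ):ℝ) * snk κ x ^ (m+1-1) * deriv (snk κ) x)
        = G x * snk κ x ^ (m+1) := by
      rw [hG, show m + 1 - 1 = m from rfl, show (2:ℕ) - 1 = 1 from rfl]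
      push_cast
      field_simp
      ring
    rw [← heq]; exact hd
  -- derivative of F' * snk^(m+1)
  have keyU : ∀ x ∈ Ioi (0:ℝ), HasDerivAt (fun r => deriv F r * snk κ r ^ (m+1))
      (((m:ℝ)+1) * F x * snk κ x ^ (m+1) / (snk κ x)^2) x := by
    intro x hx
    have hp' : snk κ x ≠ 0 := (hspos x hx).ne'
    have hd := (hF'd x hx).mul ((hsd x).pow (m+1))
    have heq : deriv (deriv F) x * snk κ x ^ (m+1)
        + deriv F x * (((m+1 : ℕ):ℝ) * snk κ x ^ (m+1-1) * deriv (snk κ) x)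
        = ((m:ℝ)+1) * F x * snk κ x ^ (m+1) / (snk κ x)^2 := by
      rw [hc x hx, show m + 1 - 1 = m from rfl]
      push_cast
      field_simp
      ring
    rw [← heq]; exact hd
  -- monotonicity of u = F' * snk^(m+1) on (0, R]
  have hu_mono : MonotoneOn (fun r => deriv F r * snk κ r ^ (m+1)) (Ioc 0 R) := by
    apply monotoneOn_of_deriv_nonneg (convex_Ioc 0 R)
    · exact fun x hx => (keyU x hx.1).continuousAt.continuousWithinAt
    · intro x hx
      rw [interior_Ioc] at hx
      exact (keyU x hx.1).differentiableAt.differentiableWithinAt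
    · intro x hx
      rw [interior_Ioc] at hx
      rw [(keyU x hx.1).deriv]
      have h1 := hFpos x hx.1
      have h2 := hspos x hx.1
      positivity
  -- continuity of g1 on [0, R]
  have hcont1 : ContinuousOn (fun r => F r * deriv F r * snk κ r ^ (m+1)) (Icc 0 R) := by
    intro x hx
    rcases eq_or_lt_of_le hx.1 with h0 | h0
    · rw [← h0]
      have hFtend : Filter.Tendsto F (nhdsWithin 0 (Icc 0 R)) (nhds 0) := by
        have h1 : ContinuousWithinAt F (Icc 0 R) 0 :=
          (hFc 0 self_mem_Ici).mono Icc_subset_Ici_self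
        rwa [ContinuousWithinAt, hF0] at h1
      have hb : Filter.Tendsto (fun r => (deriv F R * snk κ R ^ (m+1)) * F r)
          (nhdsWithin 0 (Icc 0 R)) (nhds 0) := by
        simpa using hFtend.const_mul (deriv F R * snk κ R ^ (m+1))
      have hsq : Filter.Tendsto (fun r => F r * deriv F r * snk κ r ^ (m+1))
          (nhdsWithin 0 (Icc 0 R)) (nhds 0) := by
        apply tendsto_of_tendsto_of_tendsto_of_le_of_le' tendsto_const_nhds hb
        · filter_upwards [eventually_mem_nhdsWithin] with y hy
          rcases eq_or_lt_of_le hy.1 with h1 | h1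
          · rw [← h1, hF0]; ring_nf; simp
          · have hb1 := (hF'pos y h1).le
            have hb2 := (hFpos y h1).le
            have hb3 := (hspos y h1).le
            positivity
        · filter_upwards [eventually_mem_nhdsWithin] with y hy
          rcases eq_or_lt_of_le hy.1 with h1 | h1
          · rw [← h1, hF0]; ring_nf; simp
          · have huy : deriv F y * snk κ y ^ (m+1) ≤ deriv F R * snk κ R ^ (m+1) :=
              hu_mono ⟨h1, hy.2⟩ ⟨hR, le_refl R⟩ hy.2
            have hFy := (hFpos y h1).le
            calc F y * deriv F y * snk κ y ^ (m+1)
                = F y * (deriv F y * snk κ y ^ (m+1)) := by ring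
              _ ≤ F y * (deriv F R * snk κ R ^ (m+1)) :=
                  mul_le_mul_of_nonneg_left huy hFy
              _ = deriv F R * snk κ R ^ (m+1) * F y := by ring
      have hg0 : F 0 * deriv F 0 * snk κ 0 ^ (m+1) = 0 := by rw [hF0]; ring
      show ContinuousWithinAt (fun r => F r * deriv F r * snk κ r ^ (m+1)) (Icc 0 R) 0
      rw [ContinuousWithinAt]
      simp only [hg0]
      exact hsq
    · exact (keyH x h0).continuousAt.continuousWithinAt
  have hcont2 : ContinuousOn (fun r => F r ^ 2 * snk κ r ^ (m+1)) (Icc 0 R) :=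
    ((hFc.mono Icc_subset_Ici_self).pow 2).mul
      (((snk_continuous κ).continuousOn).pow (m+1))
  -- integrability
  have hcast : (0:ℝ) ≤ ((m+2 : ℕ):ℝ) - 1 := by push_cast; linarith
  have hint1 : IntervalIntegrable (fun r => H r * snk κ r ^ (m+1))
      MeasureTheory.volume 0 R := by
    rw [intervalIntegrable_iff_integrableOn_Ioc_of_le hR.le]
    apply intervalIntegral.integrableOn_deriv_of_nonneg hcont1 (fun x hx => keyH x hx.1)
    intro x hx
    have h1 := hFpos x hx.1
    have h2 := hspos x hx.1
    rw [hH]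
    apply mul_nonneg _ (pow_nonneg h2.le _)
    exact add_nonneg (sq_nonneg _)
      (div_nonneg (mul_nonneg hcast (sq_nonneg _)) (sq_nonneg _))
  have hint2 : IntervalIntegrable (fun r => G r * snk κ r ^ (m+1))
      MeasureTheory.volume 0 R := by
    rw [intervalIntegrable_iff_integrableOn_Ioc_of_le hR.le]
    apply intervalIntegral.integrableOn_deriv_of_nonneg hcont2 (fun x hx => keyG x hx.1)
    intro x hx
    have h1 := hFpos x hx.1
    have h2 := hspos x hx.1
    have h3 := hF'pos x hx.1
    have h4 := hqpos x
    rw [hG]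
    apply mul_nonneg _ (pow_nonneg h2.le _)
    apply add_nonneg (by positivity)
    exact mul_nonneg (mul_nonneg hcast (div_nonneg h4.le h2.le)) (sq_nonneg _)
  -- FTC
  have I1 : (∫ r in (0:ℝ)..R, H r * snk κ r ^ (m+1))
      = F R * deriv F R * snk κ R ^ (m+1) - F 0 * deriv F 0 * snk κ 0 ^ (m+1) :=
    intervalIntegral.integral_eq_sub_of_hasDeriv_right_of_le hR.le hcont1
      (fun x hx => (keyH x hx.1).hasDerivWithinAt) hint1
  have I2 : (∫ r in (0:ℝ)..R, G r * snk κ r ^ (m+1))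
      = F R ^ 2 * snk κ R ^ (m+1) - F 0 ^ 2 * snk κ 0 ^ (m+1) :=
    intervalIntegral.integral_eq_sub_of_hasDeriv_right_of_le hR.le hcont2
      (fun x hx => (keyG x hx.1).hasDerivWithinAt) hint2
  rw [I1, I2, hF0, snk_zero]
  have hFR := hFpos R hR
  have hPR := hspos R hR
  have hz : (0:ℝ) ^ (m+1) = 0 := zero_pow (Nat.succ_ne_zero m)
  rw [hz]
  rw [show F R * deriv F R * snk κ R ^ (m+1) - 0 * deriv F 0 * 0
      = F R * deriv F R * snk κ R ^ (m+1) by ring]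
  rw [show F R ^ 2 * snk κ R ^ (m+1) - 0 ^ 2 * 0 = F R ^ 2 * snk κ R ^ (m+1) by ring]
  rw [div_eq_div_iff (by positivity) hFR.ne']
  ring
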